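/- Let A ∈ R^{k×n} and B ∈ R^{d×n} be matrices such that every column of B has unit Euclidean norm. Let A∗B ∈ R^{kd×n} denote the columnwise Khatri–Rao product, whose i-th column is the Kronecker product a_i ⊗ b_i of the i-th columns of A and B. Then the spectral norms satisfy ‖A∗B‖ = √(‖(AᵀA) ⊙ (BᵀB)‖) ≤ ‖A‖, where ⊙ denotes the entrywise (Hadamard) product. -/
import Mathlib


noncomputable section

def l2 {ι : Type*} [Fintype ι] (v : ι → ℝ) : ℝ := Real.sqrt (∑ i, v i ^ 2)

def spec {ι κ : Type*} [Fintype ι] [Fintype κ] (M : ι → κ → ℝ) : ℝ :=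
  sSup {r | ∃ v : κ → ℝ, l2 v ≤ 1 ∧ r = l2 fun i => ∑ j, M i j * v j}

namespace KRaux
variable {ι κ : Type*} [Fintype ι] [Fintype κ]

lemma l2_nonneg (v : ι → ℝ) : 0 ≤ l2 v := Real.sqrt_nonneg _

lemma l2_sq (v : ι → ℝ) : l2 v ^ 2 = ∑ i, v i ^ 2 :=
  Real.sq_sqrt (Finset.sum_nonneg fun _ _ => sq_nonneg _)

lemma l2_le {v : ι → ℝ} {c : ℝ} (hc : 0 ≤ c) (h : ∑ i, v i ^ 2 ≤ c ^ 2) : l2 v ≤ c := by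
  rw [l2]
  calc Real.sqrt (∑ i, v i ^ 2) ≤ Real.sqrt (c ^ 2) := Real.sqrt_le_sqrt h
  _ = c := Real.sqrt_sq hc

lemma sq_sum_le {v : ι → ℝ} {c : ℝ} (h : l2 v ≤ c) : ∑ i, v i ^ 2 ≤ c ^ 2 := by
  rw [← l2_sq]
  exact pow_le_pow_left₀ (l2_nonneg v) h 2

/-- Cauchy–Schwarz in l2 form. -/
lemma inner_le_l2 (u v : ι → ℝ) : ∑ i, u i * v i ≤ l2 u * l2 v :=
  Real.sum_mul_le_sqrt_mul_sqrt _ u v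

lemma zero_mem (M : ι → κ → ℝ) :
    (0 : ℝ) ∈ {r | ∃ v : κ → ℝ, l2 v ≤ 1 ∧ r = l2 fun i => ∑ j, M i j * v j} := by
  refine ⟨0, by simp [l2], ?_⟩
  simp [l2]

lemma bddAbove (M : ι → κ → ℝ) :
    BddAbove {r | ∃ v : κ → ℝ, l2 v ≤ 1 ∧ r = l2 fun i => ∑ j, M i j * v j} := by
  refine ⟨Real.sqrt (∑ i, ∑ j, M i j ^ 2), ?_⟩
  rintro r ⟨v, hv, rfl⟩
  refine l2_le (Real.sqrt_nonneg _) ?_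
  rw [Real.sq_sqrt (Finset.sum_nonneg fun i _ => Finset.sum_nonneg fun j _ => sq_nonneg _)]
  refine Finset.sum_le_sum fun i _ => ?_
  calc (∑ j, M i j * v j) ^ 2 ≤ (∑ j, M i j ^ 2) * ∑ j, v j ^ 2 :=
        Finset.sum_mul_sq_le_sq_mul_sq _ _ _
    _ ≤ (∑ j, M i j ^ 2) * 1 := by
        refine mul_le_mul_of_nonneg_left ?_ (Finset.sum_nonneg fun j _ => sq_nonneg _)
        simpa using sq_sum_le hv
    _ = ∑ j, M i j ^ 2 := mul_one _

lemma spec_nonneg (M : ι → κ → ℝ) : 0 ≤ spec M :=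
  le_csSup (bddAbove M) (zero_mem M)

lemma l2_smul (c : ℝ) (hc : 0 ≤ c) (v : ι → ℝ) : l2 (fun i => c * v i) = c * l2 v := by
  simp only [l2, mul_pow, ← Finset.mul_sum]
  rw [Real.sqrt_mul (by positivity), Real.sqrt_sq hc]

lemma le_spec {M : ι → κ → ℝ} {v : κ → ℝ} (hv : l2 v ≤ 1) :
    l2 (fun i => ∑ j, M i j * v j) ≤ spec M :=
  le_csSup (bddAbove M) ⟨v, hv, rfl⟩

lemma mulVec_le (M : ι → κ → ℝ) (v : κ → ℝ) :
    l2 (fun i => ∑ j, M i j * v j) ≤ spec M * l2 v := by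
  rcases eq_or_lt_of_le (l2_nonneg v) with h0 | hpos
  · have hsum : ∑ j, v j ^ 2 = 0 := by
      have := l2_sq v; rw [← h0] at this; simpa using this.symm
    have hz : ∀ j, v j = 0 := by
      intro j
      have := (Finset.sum_eq_zero_iff_of_nonneg (fun j _ => sq_nonneg (v j))).1 hsum j
        (Finset.mem_univ j)
      exact pow_eq_zero_iff (n := 2) (by norm_num) |>.1 this
    simp [l2, hz, ← h0]
  · set c := l2 v with hc
    have hc' : c ≠ 0 := ne_of_gt hpos
    have hu : l2 (fun j => c⁻¹ * v j) = 1 := by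
      rw [l2_smul c⁻¹ (by positivity), ← hc, inv_mul_cancel₀ hc']
    have h1 := le_spec (M := M) (v := fun j => c⁻¹ * v j) (le_of_eq hu)
    have h2 : (fun i => ∑ j, M i j * (c⁻¹ * v j)) = fun i => c⁻¹ * ∑ j, M i j * v j := by
      funext i
      rw [Finset.mul_sum]
      exact Finset.sum_congr rfl fun j _ => by ring
    rw [h2, l2_smul c⁻¹ (by positivity)] at h1
    calc l2 (fun i => ∑ j, M i j * v j) = c * (c⁻¹ * l2 (fun i => ∑ j, M i j * v j)) := by
          field_simp
      _ ≤ c * spec M := mul_le_mul_of_nonneg_left h1 (le_of_lt hpos)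
      _ = spec M * c := mul_comm _ _

lemma spec_le {M : ι → κ → ℝ} {C : ℝ}
    (h : ∀ v : κ → ℝ, l2 v ≤ 1 → l2 (fun i => ∑ j, M i j * v j) ≤ C) : spec M ≤ C := by
  refine csSup_le ⟨0, zero_mem M⟩ ?_
  rintro r ⟨v, hv, rfl⟩
  exact h v hv

/-- Transpose bound: ‖Mᵀu‖ ≤ spec M ‖u‖. -/
lemma transpose_le (M : ι → κ → ℝ) (u : ι → ℝ) :
    l2 (fun j => ∑ i, M i j * u i) ≤ spec M * l2 u := by
  set w : κ → ℝ := fun j => ∑ i, M i j * u i with hw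
  have hwj : ∀ j, w j = ∑ i, M i j * u i := fun j => rfl
  have key : l2 w * l2 w ≤ (spec M * l2 u) * l2 w := by
    rw [← pow_two, l2_sq]
    have h1 : ∑ j, w j ^ 2 = ∑ i, u i * ∑ j, M i j * w j := by
      simp only [Finset.mul_sum]
      rw [Finset.sum_comm]
      refine Finset.sum_congr rfl fun j _ => ?_
      rw [pow_two]
      nth_rewrite 1 [hwj j]
      rw [Finset.sum_mul]
      exact Finset.sum_congr rfl fun i _ => by ring
    rw [h1]
    calc ∑ i, u i * ∑ j, M i j * w j ≤ l2 u * l2 (fun i => ∑ j, M i j * w j) :=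
          inner_le_l2 _ _
      _ ≤ l2 u * (spec M * l2 w) :=
          mul_le_mul_of_nonneg_left (mulVec_le M w) (l2_nonneg u)
      _ = (spec M * l2 u) * l2 w := by ring
  rcases eq_or_lt_of_le (l2_nonneg w) with h0 | hpos
  · rw [← h0]
    exact mul_nonneg (spec_nonneg M) (l2_nonneg u)
  · exact le_of_mul_le_mul_right key hpos

end KRaux

open KRaux

/-- Columnwise Khatri–Rao product: the i-th column of A∗B is the Kronecker product of
the i-th columns of A and B. -/
def khatriRao {k d n : ℕ} (A : Fin k → Fin n → ℝ) (B : Fin d → Fin n → ℝ) :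
    Fin k × Fin d → Fin n → ℝ := fun q i => A q.1 i * B q.2 i

/-- Schur: spectral norm of the Khatri–Rao product: if the columns
of B have unit norm, then ‖A∗B‖ = √‖(AᵀA) ⊙ (BᵀB)‖ ≤ ‖A‖. -/
theorem khatriRao_spectral_norm
    {k d n : ℕ} (A : Fin k → Fin n → ℝ) (B : Fin d → Fin n → ℝ)
    (hB : ∀ i : Fin n, l2 (fun q => B q i) = 1) :
    spec (khatriRao A B) =
        Real.sqrt (spec fun i j : Fin n =>
          (∑ q, A q i * A q j) * (∑ q, B q i * B q j)) ∧
      spec (khatriRao A B) ≤ spec A := by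
  have hG : ∀ (v : Fin n → ℝ) (i : Fin n),
      (∑ j, ((∑ q, A q i * A q j) * (∑ q, B q i * B q j)) * v j)
        = ∑ q : Fin k × Fin d, khatriRao A B q i * ∑ j, khatriRao A B q j * v j := by
    intro v i
    calc ∑ j, ((∑ p, A p i * A p j) * (∑ q, B q i * B q j)) * v j
        = ∑ j, ∑ p, ∑ q, (A p i * A p j) * (B q i * B q j) * v j := by
          refine Finset.sum_congr rfl fun j _ => ?_
          rw [Finset.sum_mul_sum, Finset.sum_mul]
          exact Finset.sum_congr rfl fun p _ => by rw [Finset.sum_mul]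
      _ = ∑ p, ∑ q, ∑ j, (A p i * A p j) * (B q i * B q j) * v j := by
          rw [Finset.sum_comm]
          exact Finset.sum_congr rfl fun p _ => Finset.sum_comm
      _ = ∑ q : Fin k × Fin d, khatriRao A B q i * ∑ j, khatriRao A B q j * v j := by
          rw [Fintype.sum_prod_type]
          refine Finset.sum_congr rfl fun p _ => Finset.sum_congr rfl fun q _ => ?_
          show _ = (A p i * B q i) * ∑ j, (A p j * B q j) * v j
          rw [Finset.mul_sum]
          exact Finset.sum_congr rfl fun j _ => by ring
  -- quadratic form identity
  have hquad : ∀ v : Fin n → ℝ,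
      (∑ q : Fin k × Fin d, (∑ j, khatriRao A B q j * v j) ^ 2)
        = ∑ i, v i * ∑ j, ((∑ q, A q i * A q j) * (∑ q, B q i * B q j)) * v j := by
    intro v
    have h2 : ∀ i : Fin n, v i * ∑ j, ((∑ q, A q i * A q j) * (∑ q, B q i * B q j)) * v j
        = v i * ∑ q : Fin k × Fin d, khatriRao A B q i * ∑ j, khatriRao A B q j * v j :=
      fun i => by rw [hG v i]
    rw [Finset.sum_congr rfl fun i _ => h2 i]
    simp only [Finset.mul_sum]
    rw [Finset.sum_comm]
    refine Finset.sum_congr rfl fun q _ => ?_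
    rw [pow_two, Finset.sum_mul]
    simp only [Finset.mul_sum]
    exact Finset.sum_congr rfl fun x _ => Finset.sum_congr rfl fun i _ => by ring
  set SA := spec A with hSA
  set SM := spec (khatriRao A B) with hSM
  set SG := spec (fun i j : Fin n => (∑ q, A q i * A q j) * (∑ q, B q i * B q j)) with hSG
  have hB2 : ∀ j : Fin n, ∑ q, B q j ^ 2 = 1 := by
    intro j
    have := l2_sq (fun q => B q j)
    rw [hB j] at this
    simpa using this.symm
  -- Claim 1 : SM ≤ sqrt SG
  have claim1 : SM ≤ Real.sqrt SG := by
    refine spec_le fun v hv => ?_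
    have hGv_le : l2 (fun i => ∑ j, ((∑ q, A q i * A q j) * (∑ q, B q i * B q j)) * v j)
        ≤ SG := by
      refine (mulVec_le _ v).trans ?_
      calc SG * l2 v ≤ SG * 1 := mul_le_mul_of_nonneg_left hv (spec_nonneg _)
        _ = SG := mul_one _
    have hsq : (l2 fun q : Fin k × Fin d => ∑ j, khatriRao A B q j * v j) ^ 2 ≤ SG := by
      rw [l2_sq, hquad v]
      calc ∑ i, v i * ∑ j, ((∑ q, A q i * A q j) * (∑ q, B q i * B q j)) * v j
          ≤ l2 v * l2 (fun i => ∑ j, ((∑ q, A q i * A q j) * (∑ q, B q i * B q j)) * v j) :=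
            inner_le_l2 _ _
        _ ≤ 1 * SG := mul_le_mul hv hGv_le (l2_nonneg _) zero_le_one
        _ = SG := one_mul _
    calc l2 (fun q : Fin k × Fin d => ∑ j, khatriRao A B q j * v j)
        = Real.sqrt ((l2 fun q : Fin k × Fin d => ∑ j, khatriRao A B q j * v j) ^ 2) :=
          (Real.sqrt_sq (l2_nonneg _)).symm
      _ ≤ Real.sqrt SG := Real.sqrt_le_sqrt hsq
  -- Claim 2 : SG ≤ SM ^ 2
  have claim2 : SG ≤ SM ^ 2 := by
    refine spec_le fun v hv => ?_
    have heq : (fun i => ∑ j, ((∑ q, A q i * A q j) * (∑ q, B q i * B q j)) * v j)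
        = fun i => ∑ q : Fin k × Fin d, khatriRao A B q i * ∑ j, khatriRao A B q j * v j := by
      funext i; exact hG v i
    rw [heq]
    calc l2 (fun i => ∑ q : Fin k × Fin d, khatriRao A B q i * ∑ j, khatriRao A B q j * v j)
        ≤ SM * l2 (fun q : Fin k × Fin d => ∑ j, khatriRao A B q j * v j) :=
          transpose_le _ _
      _ ≤ SM * (SM * l2 v) := mul_le_mul_of_nonneg_left (mulVec_le _ v) (spec_nonneg _)
      _ ≤ SM * (SM * 1) := by
          refine mul_le_mul_of_nonneg_left ?_ (spec_nonneg _)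
          exact mul_le_mul_of_nonneg_left hv (spec_nonneg _)
      _ = SM ^ 2 := by ring
  -- Claim 3 : SM ≤ SA
  have claim3 : SM ≤ SA := by
    refine spec_le fun v hv => ?_
    refine l2_le (spec_nonneg A) ?_
    have split : ∑ q : Fin k × Fin d, (∑ j, khatriRao A B q j * v j) ^ 2
        = ∑ qd : Fin d, ∑ p : Fin k, (∑ j, A p j * (B qd j * v j)) ^ 2 := by
      rw [Fintype.sum_prod_type, Finset.sum_comm]
      refine Finset.sum_congr rfl fun qd _ => Finset.sum_congr rfl fun p _ => ?_
      congr 1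
      exact Finset.sum_congr rfl fun j _ => by show A p j * B qd j * v j = _; ring
    rw [split]
    calc ∑ qd : Fin d, ∑ p : Fin k, (∑ j, A p j * (B qd j * v j)) ^ 2
        ≤ ∑ qd : Fin d, SA ^ 2 * ∑ j, (B qd j * v j) ^ 2 := by
          refine Finset.sum_le_sum fun qd _ => ?_
          have h := mulVec_le A (fun j => B qd j * v j)
          calc ∑ p : Fin k, (∑ j, A p j * (B qd j * v j)) ^ 2
              = (l2 fun p => ∑ j, A p j * (B qd j * v j)) ^ 2 := (l2_sq _).symm
            _ ≤ (SA * l2 fun j => B qd j * v j) ^ 2 :=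
                pow_le_pow_left₀ (l2_nonneg _) h 2
            _ = SA ^ 2 * ∑ j, (B qd j * v j) ^ 2 := by rw [mul_pow, l2_sq]
      _ = SA ^ 2 * ∑ j, v j ^ 2 := by
          rw [← Finset.mul_sum]
          congr 1
          rw [Finset.sum_comm]
          refine Finset.sum_congr rfl fun j _ => ?_
          calc ∑ qd : Fin d, (B qd j * v j) ^ 2 = ∑ qd : Fin d, v j ^ 2 * B qd j ^ 2 :=
                Finset.sum_congr rfl fun qd _ => by ring
            _ = v j ^ 2 * ∑ qd, B qd j ^ 2 := by rw [Finset.mul_sum]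
            _ = v j ^ 2 := by rw [hB2 j, mul_one]
      _ ≤ SA ^ 2 * 1 := by
          refine mul_le_mul_of_nonneg_left ?_ (by positivity)
          simpa using sq_sum_le hv
      _ = SA ^ 2 := mul_one _
  refine ⟨le_antisymm claim1 ?_, claim3⟩
  calc Real.sqrt SG ≤ Real.sqrt (SM ^ 2) := Real.sqrt_le_sqrt claim2
    _ = SM := Real.sqrt_sq (spec_nonneg _)
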